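/- arXiv:2104.09795 — 2 statements merged into one kernel-verified Lean document; each statement's English description precedes it below -/
import Mathlib

section
/- Let α > β > 2, a, b > 0, f(r) = a r^{-α} - b r^{-β}, let L be a two-dimensional lattice of co-volume 1, and let V_L = (a α ζ_L(α) / (b β ζ_L(β)))^{2/(α-β)}. Then the minimal energy among dilates of L equals min_{V>0} E_f[√V·L] = E_f[√(V_L)·L] = (b^{α/(α-β)} ζ_L(β)^{α/(α-β)} / (a^{β/(α-β)} ζ_L(α)^{β/(α-β)})) · (β/α)^{β/(α-β)} · (β/α − 1), and this value is strictly negative. -/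
open scoped Pointwise

noncomputable section

/-- A point of the Euclidean plane with coordinates `a`, `b`. -/
def vec2 (a b : ℝ) : EuclideanSpace ℝ (Fin 2) := (WithLp.equiv 2 (Fin 2 → ℝ)).symm ![a, b]

/-- The lattice (as a set of points) generated by `u` and `v`. -/
def latticeSet (u v : EuclideanSpace ℝ (Fin 2)) : Set (EuclideanSpace ℝ (Fin 2)) :=
  {p | ∃ m n : ℤ, p = (m : ℝ) • u + (n : ℝ) • v}

/-- The determinant of the pair of plane vectors `(u, v)`. -/
def det2 (u v : EuclideanSpace ℝ (Fin 2)) : ℝ := u 0 * v 1 - u 1 * v 0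

/-- `L` is a two-dimensional lattice, i.e. `L = ℤu ⊕ ℤv` for a basis `(u,v)` of ℝ². -/
def IsLattice2 (L : Set (EuclideanSpace ℝ (Fin 2))) : Prop :=
  ∃ u v : EuclideanSpace ℝ (Fin 2), det2 u v ≠ 0 ∧ L = latticeSet u v

/-- `L` is a two-dimensional lattice of co-volume `V = |det(u,v)|`. -/
def IsLattice2OfCovol (L : Set (EuclideanSpace ℝ (Fin 2))) (V : ℝ) : Prop :=
  ∃ u v : EuclideanSpace ℝ (Fin 2), det2 u v ≠ 0 ∧ |det2 u v| = V ∧ L = latticeSet u v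

/-- The Epstein zeta function of a set of points: `ζ_L(s) = Σ'_{p ∈ L, p ≠ 0} |p|^{-s}`. -/
def epsteinZeta (L : Set (EuclideanSpace ℝ (Fin 2))) (s : ℝ) : ℝ :=
  ∑' p : ↥(L \ {0}), ‖(p : EuclideanSpace ℝ (Fin 2))‖ ^ (-s)

/-- The Lennard-Jones type energy `E_f[L] = Σ'_{p ∈ L, p ≠ 0} (a|p|^{-α} - b|p|^{-β})`. -/
def LJenergy (a b α β : ℝ) (L : Set (EuclideanSpace ℝ (Fin 2))) : ℝ :=
  ∑' p : ↥(L \ {0}),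
    (a * ‖(p : EuclideanSpace ℝ (Fin 2))‖ ^ (-α) - b * ‖(p : EuclideanSpace ℝ (Fin 2))‖ ^ (-β))

/-- The triangular lattice `A₂ = √(2/√3)·[ℤ(1,0) ⊕ ℤ(1/2,√3/2)]`, of co-volume 1. -/
def triangularLattice : Set (EuclideanSpace ℝ (Fin 2)) :=
  latticeSet (Real.sqrt (2 / Real.sqrt 3) • vec2 1 0)
    (Real.sqrt (2 / Real.sqrt 3) • vec2 (1 / 2) (Real.sqrt 3 / 2))

/-- The square lattice `ℤ² = ℤ(1,0) ⊕ ℤ(0,1)`. -/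
def squareLattice : Set (EuclideanSpace ℝ (Fin 2)) := latticeSet (vec2 1 0) (vec2 0 1)

/-- `L` is the image of `L'` under an orthogonal transformation of ℝ². -/
def IsRotationOf (L L' : Set (EuclideanSpace ℝ (Fin 2))) : Prop :=
  ∃ O : EuclideanSpace ℝ (Fin 2) ≃ₗᵢ[ℝ] EuclideanSpace ℝ (Fin 2), L = O '' L'

/-- The unit co-volume lattice parametrized by `(x, y)` in the half-fundamental domain:
`ℤu ⊕ ℤv` with `u = (1/√y, 0)` and `v = (x/√y, √y)`. -/
def latticeXY (x y : ℝ) : Set (EuclideanSpace ℝ (Fin 2)) :=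
  latticeSet (vec2 (1 / Real.sqrt y) 0) (vec2 (x / Real.sqrt y) (Real.sqrt y))

/-- The Riemann zeta function `ζ(s) = Σ_{m ≥ 1} m^{-s}` (real variable version). -/
def riemannZetaReal (s : ℝ) : ℝ := ∑' n : ℕ+, (n : ℝ) ^ (-s)

end

lemma coeffs_eq_zero {u v : EuclideanSpace ℝ (Fin 2)} (hdet : det2 u v ≠ 0) {x y : ℝ}
    (h : x • u + y • v = 0) : x = 0 ∧ y = 0 := by
  have h0 : x * u 0 + y * v 0 = 0 := by
    have := congrArg (fun p : EuclideanSpace ℝ (Fin 2) => p 0) h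
    simpa [PiLp.add_apply, PiLp.smul_apply, smul_eq_mul] using this
  have h1 : x * u 1 + y * v 1 = 0 := by
    have := congrArg (fun p : EuclideanSpace ℝ (Fin 2) => p 1) h
    simpa [PiLp.add_apply, PiLp.smul_apply, smul_eq_mul] using this
  constructor
  · have hx : x * det2 u v = 0 := by
      unfold det2; linear_combination v 1 * h0 - v 0 * h1
    rcases mul_eq_zero.mp hx with h' | h'
    · exact h'
    · exact absurd h' hdet
  · have hy : y * det2 u v = 0 := by
      unfold det2; linear_combination u 0 * h1 - u 1 * h0
    rcases mul_eq_zero.mp hy with h' | h'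
    · exact h'
    · exact absurd h' hdet

lemma summable_epstein {u v : EuclideanSpace ℝ (Fin 2)} (hdet : det2 u v ≠ 0) {s : ℝ} (hs : 2 < s) :
    Summable (fun p : ↥(latticeSet u v \ {0}) => ‖(p : EuclideanSpace ℝ (Fin 2))‖ ^ (-s)) := by
  set φ : (Fin 2 → ℤ) → EuclideanSpace ℝ (Fin 2) := fun x => (x 0 : ℝ) • u + (x 1 : ℝ) • v with hφ
  have hφ0 : φ 0 = 0 := by simp [hφ]
  have hφinj : Function.Injective φ := by
    intro x y hxy
    have hxy' : (x 0 : ℝ) • u + (x 1 : ℝ) • v = (y 0 : ℝ) • u + (y 1 : ℝ) • v := hxy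
    have h : ((x 0 : ℝ) - (y 0 : ℝ)) • u + ((x 1 : ℝ) - (y 1 : ℝ)) • v = 0 := by
      rw [sub_smul, sub_smul, sub_add_sub_comm, hxy', sub_self]
    obtain ⟨h0, h1⟩ := coeffs_eq_zero hdet h
    funext i
    fin_cases i
    · exact_mod_cast sub_eq_zero.mp h0
    · exact_mod_cast sub_eq_zero.mp h1
  have hmem : ∀ x : {x : Fin 2 → ℤ // x ≠ 0}, φ x.1 ∈ latticeSet u v \ {0} := by
    rintro ⟨x, hx⟩
    refine ⟨⟨x 0, x 1, rfl⟩, ?_⟩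
    simp only [Set.mem_singleton_iff]
    intro h0
    exact hx (hφinj (h0.trans hφ0.symm))
  set e : {x : Fin 2 → ℤ // x ≠ 0} → ↥(latticeSet u v \ {0}) :=
    fun x => ⟨φ x.1, hmem x⟩ with he
  have hebij : Function.Bijective e := by
    constructor
    · intro x y hxy
      exact Subtype.ext (hφinj (congrArg Subtype.val hxy))
    · rintro ⟨p, ⟨m, n, rfl⟩, hp0⟩
      refine ⟨⟨![m, n], ?_⟩, ?_⟩
      · intro h
        apply hp0
        have hm : m = 0 := by simpa using congrFun h 0
        have hn : n = 0 := by simpa using congrFun h 1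
        simp [hm, hn]
      · apply Subtype.ext
        show φ ![m, n] = _
        simp [hφ]
  refine ((Equiv.ofBijective e hebij).summable_iff).mp ?_
  show Summable (fun x : {x : Fin 2 → ℤ // x ≠ 0} => ‖φ x.1‖ ^ (-s))
  -- bound
  set C : ℝ := (|u 0| + |u 1| + |v 0| + |v 1|) / |det2 u v| with hC
  have habs : 0 < |det2 u v| := abs_pos.mpr hdet
  have hCpos : 0 < C := by
    apply div_pos _ habs
    by_contra hcon
    push_neg at hcon
    have hu0 := abs_nonneg (u 0); have hu1 := abs_nonneg (u 1)
    have hv0 := abs_nonneg (v 0); have hv1 := abs_nonneg (v 1)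
    apply hdet
    have e0 : u 0 = 0 := abs_eq_zero.mp (le_antisymm (by linarith) (abs_nonneg _))
    have e1 : u 1 = 0 := abs_eq_zero.mp (le_antisymm (by linarith) (abs_nonneg _))
    unfold det2
    rw [e0, e1]; ring
  have hcoord : ∀ (p : EuclideanSpace ℝ (Fin 2)) (i : Fin 2), |p i| ≤ ‖p‖ := by
    intro p i
    rw [EuclideanSpace.norm_eq]
    calc |p i| = Real.sqrt (‖p i‖ ^ 2) := by
          rw [Real.sqrt_sq (norm_nonneg _), Real.norm_eq_abs]
      _ ≤ _ := Real.sqrt_le_sqrt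
          (Finset.single_le_sum (fun j _ => sq_nonneg ‖p j‖) (Finset.mem_univ i))
  have hkey : ∀ x : Fin 2 → ℤ, (‖x‖ : ℝ) ≤ C * ‖φ x‖ := by
    intro x
    have hp0 : (φ x) 0 = (x 0 : ℝ) * u 0 + (x 1 : ℝ) * v 0 := by
      simp [hφ, PiLp.add_apply, PiLp.smul_apply, smul_eq_mul]
    have hp1 : (φ x) 1 = (x 0 : ℝ) * u 1 + (x 1 : ℝ) * v 1 := by
      simp [hφ, PiLp.add_apply, PiLp.smul_apply, smul_eq_mul]
    have hx0 : |(x 0 : ℝ)| * |det2 u v| ≤ ‖φ x‖ * (|v 0| + |v 1|) := by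
      have hc : (x 0 : ℝ) * det2 u v = (φ x) 0 * v 1 - (φ x) 1 * v 0 := by
        rw [hp0, hp1]; unfold det2; ring
      calc |(x 0 : ℝ)| * |det2 u v| = |(x 0 : ℝ) * det2 u v| := (abs_mul _ _).symm
        _ = |(φ x) 0 * v 1 - (φ x) 1 * v 0| := by rw [hc]
        _ ≤ |(φ x) 0 * v 1| + |(φ x) 1 * v 0| := abs_sub _ _
        _ = |(φ x) 0| * |v 1| + |(φ x) 1| * |v 0| := by rw [abs_mul, abs_mul]
        _ ≤ ‖φ x‖ * |v 1| + ‖φ x‖ * |v 0| := by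
            gcongr <;> [exact hcoord _ 0; exact hcoord _ 1]
        _ = ‖φ x‖ * (|v 0| + |v 1|) := by ring
    have hx1 : |(x 1 : ℝ)| * |det2 u v| ≤ ‖φ x‖ * (|u 0| + |u 1|) := by
      have hc : (x 1 : ℝ) * det2 u v = (φ x) 1 * u 0 - (φ x) 0 * u 1 := by
        rw [hp0, hp1]; unfold det2; ring
      calc |(x 1 : ℝ)| * |det2 u v| = |(x 1 : ℝ) * det2 u v| := (abs_mul _ _).symm
        _ = |(φ x) 1 * u 0 - (φ x) 0 * u 1| := by rw [hc]
        _ ≤ |(φ x) 1 * u 0| + |(φ x) 0 * u 1| := abs_sub _ _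
        _ = |(φ x) 1| * |u 0| + |(φ x) 0| * |u 1| := by rw [abs_mul, abs_mul]
        _ ≤ ‖φ x‖ * |u 0| + ‖φ x‖ * |u 1| := by
            gcongr <;> [exact hcoord _ 1; exact hcoord _ 0]
        _ = ‖φ x‖ * (|u 0| + |u 1|) := by ring
    rw [pi_norm_le_iff_of_nonneg (by positivity)]
    intro i
    have hn : (0:ℝ) ≤ ‖φ x‖ := norm_nonneg _
    have ha0 := abs_nonneg (u 0); have ha1 := abs_nonneg (u 1)
    have hb0 := abs_nonneg (v 0); have hb1 := abs_nonneg (v 1)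
    fin_cases i
    · show ‖x 0‖ ≤ C * ‖φ x‖
      rw [Int.norm_eq_abs, hC, div_mul_eq_mul_div, le_div_iff₀ habs]
      push_cast
      nlinarith [hx0]
    · show ‖x 1‖ ≤ C * ‖φ x‖
      rw [Int.norm_eq_abs, hC, div_mul_eq_mul_div, le_div_iff₀ habs]
      push_cast
      nlinarith [hx1]
  refine Summable.of_nonneg_of_le (fun x => Real.rpow_nonneg (norm_nonneg _) _)
    (fun x => ?_)
    (((EisensteinSeries.summable_one_div_norm_rpow hs).mul_left (C ^ s)).subtype
      {x : Fin 2 → ℤ | x ≠ 0})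
  have hxpos : (0:ℝ) < ‖x.1‖ := norm_pos_iff.mpr x.2
  have hle : ‖x.1‖ / C ≤ ‖φ x.1‖ := by
    rw [div_le_iff₀ hCpos]
    linarith [hkey x.1]
  calc ‖φ x.1‖ ^ (-s) ≤ (‖x.1‖ / C) ^ (-s) :=
        Real.rpow_le_rpow_of_nonpos (by positivity) hle (by linarith)
    _ = C ^ s * ‖x.1‖ ^ (-s) := by
        rw [Real.div_rpow (norm_nonneg _) hCpos.le, Real.rpow_neg hCpos.le]
        field_simp [mul_comm]

lemma epstein_pos {u v : EuclideanSpace ℝ (Fin 2)} (hdet : det2 u v ≠ 0) {s : ℝ} (hs : 2 < s) :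
    0 < epsteinZeta (latticeSet u v) s := by
  have hune : u ≠ 0 := by
    intro h
    apply hdet
    have : u 0 = 0 ∧ u 1 = 0 := by constructor <;> · rw [h]; rfl
    unfold det2
    rw [this.1, this.2]; ring
  have hu : u ∈ latticeSet u v \ {0} := by
    constructor
    · exact ⟨1, 0, by push_cast; simp⟩
    · simpa using hune
  refine Summable.tsum_pos (summable_epstein hdet hs)
    (fun p => Real.rpow_nonneg (norm_nonneg _) _) ⟨u, hu⟩ ?_
  exact Real.rpow_pos_of_pos (norm_pos_iff.mpr hune) _

lemma LJ_scaled {u v : EuclideanSpace ℝ (Fin 2)} (hdet : det2 u v ≠ 0) {α β a b : ℝ}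
    (hβ : 2 < β) (hαβ : β < α) {c : ℝ} (hc : 0 < c) :
    LJenergy a b α β (c • latticeSet u v) =
      a * c ^ (-α) * epsteinZeta (latticeSet u v) α
        - b * c ^ (-β) * epsteinZeta (latticeSet u v) β := by
  set L := latticeSet u v with hLdef
  have hα : (2:ℝ) < α := hβ.trans hαβ
  have hset : (c • L) \ {0} = (fun p : EuclideanSpace ℝ (Fin 2) => c • p) '' (L \ {0}) := by
    ext p
    simp only [Set.mem_diff, Set.mem_singleton_iff, Set.mem_image, Set.mem_smul_set]
    constructor
    · rintro ⟨⟨q, hq, rfl⟩, hne⟩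
      exact ⟨q, ⟨hq, fun h => hne (by simp [h])⟩, rfl⟩
    · rintro ⟨q, ⟨hq, hqne⟩, rfl⟩
      exact ⟨⟨q, hq, rfl⟩, by simp [smul_eq_zero, hc.ne', hqne]⟩
  have hinj : Set.InjOn (fun p : EuclideanSpace ℝ (Fin 2) => c • p) (L \ {0}) :=
    fun p _ q _ h => smul_right_injective (EuclideanSpace ℝ (Fin 2)) hc.ne' h
  have h1 : Summable (fun p : ↥(L \ {0}) => a * c ^ (-α) * ‖(p:EuclideanSpace ℝ (Fin 2))‖ ^ (-α)) :=
    (summable_epstein hdet hα).mul_left _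
  have h2 : Summable (fun p : ↥(L \ {0}) => b * c ^ (-β) * ‖(p:EuclideanSpace ℝ (Fin 2))‖ ^ (-β)) :=
    (summable_epstein hdet hβ).mul_left _
  have heq : ∀ p : ↥(L \ {0}),
      a * ‖c • (p:EuclideanSpace ℝ (Fin 2))‖ ^ (-α) - b * ‖c • (p:EuclideanSpace ℝ (Fin 2))‖ ^ (-β)
      = a * c ^ (-α) * ‖(p:EuclideanSpace ℝ (Fin 2))‖ ^ (-α) - b * c ^ (-β) * ‖(p:EuclideanSpace ℝ (Fin 2))‖ ^ (-β) := by
    intro p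
    rw [norm_smul, Real.norm_of_nonneg hc.le, Real.mul_rpow hc.le (norm_nonneg _),
      Real.mul_rpow hc.le (norm_nonneg _)]
    ring
  unfold LJenergy epsteinZeta
  rw [hset, tsum_image (fun q : EuclideanSpace ℝ (Fin 2) => a * ‖q‖ ^ (-α) - b * ‖q‖ ^ (-β)) hinj, tsum_congr heq, Summable.tsum_sub h1 h2, tsum_mul_left, tsum_mul_left]

lemma key_ineq {A B α β t t₀ : ℝ} (hA : 0 < A) (hB : 0 < B) (hβ : 0 < β)
    (hαβ : β < α) (ht : 0 < t) (ht₀ : 0 < t₀)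
    (h : t₀ ^ (α - β) = B * β / (A * α)) :
    B * t₀ ^ β * (β / α - 1) ≤ A * t ^ α - B * t ^ β := by
  have hα : 0 < α := hβ.trans hαβ
  have hw : (0:ℝ) ≤ β / α := by positivity
  have hw' : (0:ℝ) ≤ 1 - β / α := by
    have : β / α ≤ 1 := le_of_lt ((div_lt_one hα).mpr hαβ)
    linarith
  have hr : (0:ℝ) < t / t₀ := by positivity
  have hgm := Real.geom_mean_le_arith_mean2_weighted hw hw'
    (le_of_lt (Real.rpow_pos_of_pos hr α)) zero_le_one (by ring)
  rw [Real.one_rpow, mul_one, mul_one] at hgm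
  have hpow : ((t / t₀) ^ α) ^ (β / α) = (t / t₀) ^ β := by
    rw [← Real.rpow_mul hr.le]
    congr 1
    field_simp
  rw [hpow] at hgm
  -- hgm : (t/t₀)^β ≤ β/α * (t/t₀)^α + (1 - β/α)
  rw [Real.div_rpow ht.le ht₀.le, Real.div_rpow ht.le ht₀.le] at hgm
  have hta : (0:ℝ) < t₀ ^ α := Real.rpow_pos_of_pos ht₀ α
  have htb : (0:ℝ) < t₀ ^ β := Real.rpow_pos_of_pos ht₀ β
  have hd : t₀ ^ β / t₀ ^ α = A * α / (B * β) := by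
    rw [← Real.rpow_sub ht₀, show β - α = -(α - β) by ring, Real.rpow_neg ht₀.le, h,
      inv_div]
  have hq : B * (β / α) * (t₀ ^ β / t₀ ^ α) = A := by
    rw [hd]
    field_simp
  have h3 : B * t ^ β ≤ A * t ^ α + B * (1 - β / α) * t₀ ^ β := by
    calc B * t ^ β = (B * t₀ ^ β) * (t ^ β / t₀ ^ β) := by field_simp
      _ ≤ (B * t₀ ^ β) * (β / α * (t ^ α / t₀ ^ α) + (1 - β / α)) :=
          mul_le_mul_of_nonneg_left hgm (by positivity)
      _ = (B * (β / α) * (t₀ ^ β / t₀ ^ α)) * t ^ α + B * (1 - β / α) * t₀ ^ β := by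
          field_simp
      _ = A * t ^ α + B * (1 - β / α) * t₀ ^ β := by rw [hq]
  nlinarith [h3]

lemma key_eq {A B α β t₀ : ℝ} (hA : 0 < A) (hB : 0 < B) (hβ : 0 < β)
    (hαβ : β < α) (ht₀ : 0 < t₀)
    (h : t₀ ^ (α - β) = B * β / (A * α)) :
    A * t₀ ^ α - B * t₀ ^ β = B * t₀ ^ β * (β / α - 1) := by
  have hα : 0 < α := hβ.trans hαβ
  have hsplit : t₀ ^ α = t₀ ^ (α - β) * t₀ ^ β := by
    rw [← Real.rpow_add ht₀]
    ring_nf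
  rw [hsplit, h]
  field_simp

/-- The minimal Lennard-Jones type energy among the dilates of a unit co-volume lattice `L`
is attained at `V_L` and equals
`(b^{α/(α-β)}ζ_L(β)^{α/(α-β)}/(a^{β/(α-β)}ζ_L(α)^{β/(α-β)}))·(β/α)^{β/(α-β)}·(β/α - 1) < 0`. -/
theorem minimal_energy_among_dilations
    (α β a b : ℝ) (hβ : 2 < β) (hαβ : β < α) (ha : 0 < a) (hb : 0 < b)
    (L : Set (EuclideanSpace ℝ (Fin 2))) (hL : IsLattice2OfCovol L 1) (VL : ℝ)
    (hVL : VL = (a * α * epsteinZeta L α / (b * β * epsteinZeta L β)) ^ (2 / (α - β))) :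
    (∀ V : ℝ, 0 < V →
      LJenergy a b α β (Real.sqrt VL • L) ≤ LJenergy a b α β (Real.sqrt V • L)) ∧
    LJenergy a b α β (Real.sqrt VL • L) =
      b ^ (α / (α - β)) * epsteinZeta L β ^ (α / (α - β)) /
        (a ^ (β / (α - β)) * epsteinZeta L α ^ (β / (α - β))) *
        (β / α) ^ (β / (α - β)) * (β / α - 1) ∧
    LJenergy a b α β (Real.sqrt VL • L) < 0 := by

  obtain ⟨u, v, hdet, hcov, rfl⟩ := hL
  have hα : (2:ℝ) < α := hβ.trans hαβ
  have hαpos : (0:ℝ) < α := by linarith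
  have hβpos : (0:ℝ) < β := by linarith
  have hne : α - β ≠ 0 := ne_of_gt (sub_pos.mpr hαβ)
  set ζα := epsteinZeta (latticeSet u v) α with hζαdef
  set ζβ := epsteinZeta (latticeSet u v) β with hζβdef
  have hζα : 0 < ζα := epstein_pos hdet hα
  have hζβ : 0 < ζβ := epstein_pos hdet hβ
  set K : ℝ := a * α * ζα / (b * β * ζβ) with hK
  have hKpos : 0 < K := by positivity
  have hVLpos : 0 < VL := by rw [hVL]; positivity
  set c₀ := Real.sqrt VL with hc₀def
  have hc₀ : 0 < c₀ := Real.sqrt_pos.mpr hVLpos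
  have hc₀eq : c₀ = K ^ ((α - β)⁻¹) := by
    rw [hc₀def, hVL, Real.sqrt_eq_rpow, ← Real.rpow_mul hKpos.le]
    congr 1
    field_simp
  set t₀ := c₀⁻¹ with ht₀def
  have ht₀pos : 0 < t₀ := by positivity
  have ht₀K : t₀ = K ^ (-(α - β)⁻¹) := by
    rw [ht₀def, hc₀eq, ← Real.rpow_neg hKpos.le]
  have ht₀pow : t₀ ^ (α - β) = (b * ζβ) * β / ((a * ζα) * α) := by
    rw [ht₀K, ← Real.rpow_mul hKpos.le,
      show -(α - β)⁻¹ * (α - β) = -1 by field_simp,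
      Real.rpow_neg_one, hK, inv_div]
    ring
  have hA : 0 < a * ζα := by positivity
  have hB : 0 < b * ζβ := by positivity
  have hval : ∀ c : ℝ, 0 < c → LJenergy a b α β (c • latticeSet u v)
      = (a * ζα) * (c⁻¹) ^ α - (b * ζβ) * (c⁻¹) ^ β := by
    intro c hc
    rw [LJ_scaled hdet hβ hαβ hc, Real.rpow_neg hc.le, Real.rpow_neg hc.le,
      ← Real.inv_rpow hc.le, ← Real.inv_rpow hc.le]
    ring
  have hmin : LJenergy a b α β (c₀ • latticeSet u v)
      = (b * ζβ) * t₀ ^ β * (β / α - 1) := by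
    rw [hval c₀ hc₀, ← ht₀def]
    exact key_eq hA hB hβpos hαβ ht₀pos ht₀pow
  refine ⟨?_, ?_, ?_⟩
  · intro V hV
    have hcV : 0 < Real.sqrt V := Real.sqrt_pos.mpr hV
    rw [hmin, hval _ hcV]
    exact key_ineq hA hB hβpos hαβ (by positivity) ht₀pos ht₀pow
  · rw [hmin]
    have he : α / (α - β) = β / (α - β) + 1 := by field_simp; ring
    set e₂ := β / (α - β) with he₂
    have ht₀β : t₀ ^ β
        = (b ^ e₂ * ζβ ^ e₂ * β ^ e₂) / (a ^ e₂ * ζα ^ e₂ * α ^ e₂) := by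
      rw [ht₀K, ← Real.rpow_mul hKpos.le,
        show -(α - β)⁻¹ * β = -e₂ by rw [he₂]; ring,
        Real.rpow_neg hKpos.le, ← Real.inv_rpow hKpos.le, hK, inv_div,
        show b * β * ζβ = b * ζβ * β by ring,
        show a * α * ζα = a * ζα * α by ring,
        Real.div_rpow (by positivity) (by positivity),
        Real.mul_rpow (by positivity) hβpos.le,
        Real.mul_rpow hb.le hζβ.le,
        Real.mul_rpow (by positivity) hαpos.le,
        Real.mul_rpow ha.le hζα.le]
    rw [ht₀β, he, Real.rpow_add hb, Real.rpow_one, Real.rpow_add hζβ, Real.rpow_one,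
      Real.div_rpow hβpos.le hαpos.le]
    have h1 : a ^ e₂ ≠ 0 := by positivity
    have h2 : ζα ^ e₂ ≠ 0 := by positivity
    have h3 : α ^ e₂ ≠ 0 := by positivity
    field_simp
  · rw [hmin]
    apply mul_neg_of_pos_of_neg
    · exact mul_pos hB (Real.rpow_pos_of_pos ht₀pos β)
    · have : β / α < 1 := (div_lt_one hαpos).mpr hαβ
      linarith
end

section
/- Suppose that for every s > 2, the triangular lattice A₂ is the unique minimizer (up to orthogonal transformation) among two-dimensional lattices of co-volume 1 of the function F_s(L) = −Σ_{p ∈ L, p ≠ 0} (s·log|p| + 1)/|p|^s; i.e., F_s(L) ≥ F_s(A₂) with equality iff L = O·A₂ for some orthogonal O. Then for all α > β > 2 and every lattice L of co-volume 1 that is not the image of A₂ under an orthogonal transformation, ζ_L(α) − ζ_{A₂}(α) > (α/β)·(ζ_L(β) − ζ_{A₂}(β)). -/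
/-- The energy appearing in Conjecture 1: `F_s(L) = -Σ'_{p ∈ L, p ≠ 0} (s·log|p| + 1)/|p|^s`. -/
noncomputable def Fenergy (s : ℝ) (L : Set (EuclideanSpace ℝ (Fin 2))) : ℝ :=
  -∑' p : ↥(L \ {0}),
    (s * Real.log ‖(p : EuclideanSpace ℝ (Fin 2))‖ + 1) / ‖(p : EuclideanSpace ℝ (Fin 2))‖ ^ s

open Real

lemma abs_coord_le (w : EuclideanSpace ℝ (Fin 2)) (i : Fin 2) : |w i| ≤ ‖w‖ := by
  rw [EuclideanSpace.norm_eq]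
  have h1 : ‖w i‖ ^ 2 ≤ ∑ j, ‖w j‖ ^ 2 :=
    Finset.single_le_sum (f := fun j => ‖w j‖ ^ 2) (fun j _ => sq_nonneg _) (Finset.mem_univ i)
  calc |w i| = Real.sqrt (‖w i‖ ^ 2) := by
        rw [Real.sqrt_sq_eq_abs, abs_norm, Real.norm_eq_abs]
    _ ≤ _ := Real.sqrt_le_sqrt h1

lemma lin_indep2 {u v : EuclideanSpace ℝ (Fin 2)} (hdet : det2 u v ≠ 0)
    {a b : ℝ} (h : a • u + b • v = 0) : a = 0 ∧ b = 0 := by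
  have h0 : a * u 0 + b * v 0 = 0 := by
    have := congrFun (congrArg (fun (w : EuclideanSpace ℝ (Fin 2)) => (w : Fin 2 → ℝ)) h) 0
    simpa using this
  have h1 : a * u 1 + b * v 1 = 0 := by
    have := congrFun (congrArg (fun (w : EuclideanSpace ℝ (Fin 2)) => (w : Fin 2 → ℝ)) h) 1
    simpa using this
  unfold det2 at hdet
  constructor
  · have : a * (u 0 * v 1 - u 1 * v 0) = 0 := by linear_combination v 1 * h0 - v 0 * h1
    exact (mul_eq_zero.1 this).resolve_right hdet
  · have : b * (u 0 * v 1 - u 1 * v 0) = 0 := by linear_combination u 0 * h1 - u 1 * h0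
    exact (mul_eq_zero.1 this).resolve_right hdet

lemma lattice_equiv (u v : EuclideanSpace ℝ (Fin 2)) (hdet : det2 u v ≠ 0) :
    ∃ e : {x : Fin 2 → ℤ // x ≠ 0} ≃ ↥(latticeSet u v \ {0}),
      ∀ x, ((e x : EuclideanSpace ℝ (Fin 2)))
        = ((x : Fin 2 → ℤ) 0 : ℝ) • u + ((x : Fin 2 → ℤ) 1 : ℝ) • v := by
  have key : ∀ x : Fin 2 → ℤ, x ≠ 0 →
      ((x 0 : ℝ) • u + (x 1 : ℝ) • v) ∈ latticeSet u v \ {0} := by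
    intro x hx
    refine ⟨⟨x 0, x 1, rfl⟩, ?_⟩
    simp only [Set.mem_singleton_iff]
    intro h0
    obtain ⟨h1, h2⟩ := lin_indep2 hdet h0
    apply hx
    funext i
    fin_cases i
    · exact_mod_cast h1
    · exact_mod_cast h2
  set f : {x : Fin 2 → ℤ // x ≠ 0} → ↥(latticeSet u v \ {0}) :=
    fun x => ⟨(x.1 0 : ℝ) • u + (x.1 1 : ℝ) • v, key x.1 x.2⟩ with hf
  have hbij : Function.Bijective f := by
    constructor
    · rintro ⟨x, hx⟩ ⟨y, hy⟩ hxy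
      have h : (x 0 : ℝ) • u + (x 1 : ℝ) • v = (y 0 : ℝ) • u + (y 1 : ℝ) • v :=
        congrArg Subtype.val hxy
      have h2 : ((x 0 : ℝ) - y 0) • u + ((x 1 : ℝ) - y 1) • v = 0 := by
        have : ((x 0 : ℝ) - y 0) • u + ((x 1 : ℝ) - y 1) • v =
            ((x 0 : ℝ) • u + (x 1 : ℝ) • v) - ((y 0 : ℝ) • u + (y 1 : ℝ) • v) := by
          rw [sub_smul, sub_smul]; abel
        rw [this, h, sub_self]
      obtain ⟨e1, e2⟩ := lin_indep2 hdet h2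
      have e1' : x 0 = y 0 := by exact_mod_cast sub_eq_zero.1 e1
      have e2' : x 1 = y 1 := by exact_mod_cast sub_eq_zero.1 e2
      apply Subtype.ext
      funext i
      fin_cases i <;> assumption
    · rintro ⟨p, hp, hp0⟩
      obtain ⟨m, n, rfl⟩ := hp
      have hx : (![m, n] : Fin 2 → ℤ) ≠ 0 := by
        intro h
        apply hp0
        have hm : m = 0 := by simpa using congrFun h 0
        have hn : n = 0 := by simpa using congrFun h 1
        simp [hm, hn]
      refine ⟨⟨![m, n], hx⟩, ?_⟩
      apply Subtype.ext
      simp [hf]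
  exact ⟨Equiv.ofBijective f hbij, fun x => rfl⟩

lemma lattice_lb (u v : EuclideanSpace ℝ (Fin 2)) (hdet : det2 u v ≠ 0) :
    ∃ c : ℝ, 0 < c ∧ ∀ x : Fin 2 → ℤ, x ≠ 0 →
      c ≤ ‖(x 0 : ℝ) • u + (x 1 : ℝ) • v‖ ∧
      c * ‖x‖ ≤ ‖(x 0 : ℝ) • u + (x 1 : ℝ) • v‖ := by
  set D : ℝ := |u 0| + |u 1| + |v 0| + |v 1| + 1 with hD
  have hDpos : 0 < D := by positivity
  have hdt : 0 < |det2 u v| := abs_pos.2 hdet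
  refine ⟨|det2 u v| / D, by positivity, ?_⟩
  intro x hx
  set a : ℝ := (x 0 : ℝ)
  set b : ℝ := (x 1 : ℝ)
  set w : EuclideanSpace ℝ (Fin 2) := a • u + b • v with hw
  have hw0 : w 0 = a * u 0 + b * v 0 := by simp [hw]
  have hw1 : w 1 = a * u 1 + b * v 1 := by simp [hw]
  have hA : |a| * |det2 u v| ≤ ‖w‖ * D := by
    have key : a * det2 u v = w 0 * v 1 - w 1 * v 0 := by
      rw [hw0, hw1]; unfold det2; ring
    have h1 : |a * det2 u v| ≤ |w 0| * |v 1| + |w 1| * |v 0| := by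
      rw [key]; exact (abs_sub _ _).trans (by rw [abs_mul, abs_mul])
    rw [abs_mul] at h1
    have c0 := abs_coord_le w 0
    have c1 := abs_coord_le w 1
    have hwn : (0:ℝ) ≤ ‖w‖ := norm_nonneg w
    nlinarith [abs_nonneg (v 0), abs_nonneg (v 1), abs_nonneg (u 0), abs_nonneg (u 1),
      abs_nonneg (w 0), abs_nonneg (w 1)]
  have hB : |b| * |det2 u v| ≤ ‖w‖ * D := by
    have key : b * det2 u v = w 1 * u 0 - w 0 * u 1 := by
      rw [hw0, hw1]; unfold det2; ring
    have h1 : |b * det2 u v| ≤ |w 1| * |u 0| + |w 0| * |u 1| := by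
      rw [key]; exact (abs_sub _ _).trans (by rw [abs_mul, abs_mul])
    rw [abs_mul] at h1
    have c0 := abs_coord_le w 0
    have c1 := abs_coord_le w 1
    have hwn : (0:ℝ) ≤ ‖w‖ := norm_nonneg w
    nlinarith [abs_nonneg (v 0), abs_nonneg (v 1), abs_nonneg (u 0), abs_nonneg (u 1),
      abs_nonneg (w 0), abs_nonneg (w 1)]
  have hxnorm : ‖x‖ = max |a| |b| := by
    rw [EisensteinSeries.norm_eq_max_natAbs, Nat.cast_max]
    congr 1 <;> rw [Nat.cast_natAbs, Int.cast_abs]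
  have hmain : |det2 u v| / D * ‖x‖ ≤ ‖w‖ := by
    rw [hxnorm, div_mul_eq_mul_div, div_le_iff₀ hDpos, mul_comm |det2 u v| _]
    rcases max_cases |a| |b| with ⟨hm, _⟩ | ⟨hm, _⟩ <;> rw [hm]
    · exact hA
    · exact hB
  have hx1 : (1:ℝ) ≤ ‖x‖ := by
    rw [EisensteinSeries.norm_eq_max_natAbs]
    have : x 0 ≠ 0 ∨ x 1 ≠ 0 := by
      by_contra hc
      push_neg at hc
      exact hx (by funext i; fin_cases i <;> simp [hc.1, hc.2])
    rcases this with h | h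
    · have : 1 ≤ (x 0).natAbs := Int.natAbs_pos.2 h
      exact_mod_cast le_max_of_le_left (Nat.one_le_cast.2 this)
    · have : 1 ≤ (x 1).natAbs := Int.natAbs_pos.2 h
      exact_mod_cast le_max_of_le_right (Nat.one_le_cast.2 this)
  refine ⟨?_, hmain⟩
  calc |det2 u v| / D = |det2 u v| / D * 1 := by ring
    _ ≤ |det2 u v| / D * ‖x‖ := by
        apply mul_le_mul_of_nonneg_left hx1 (by positivity)
    _ ≤ ‖w‖ := hmain

lemma hasDerivAt_term (r : ℝ) (hr : 0 < r) {s : ℝ} (hs : s ≠ 0) :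
    HasDerivAt (fun t : ℝ => r ^ (-t) / t)
      (-((s * Real.log r + 1) * r ^ (-s)) / s ^ 2) s := by
  have h1 : HasDerivAt (fun t : ℝ => r ^ (-t)) (-Real.log r * r ^ (-s)) s := by
    have h2 : HasDerivAt (fun t : ℝ => Real.log r * -t) (Real.log r * -1) s :=
      (hasDerivAt_id s).neg.const_mul (Real.log r)
    have h3 := (Real.hasDerivAt_exp (Real.log r * -s)).comp s h2
    have hfun : (fun t : ℝ => r ^ (-t)) = fun t : ℝ => Real.exp (Real.log r * -t) := by
      funext t; rw [Real.rpow_def_of_pos hr]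
    rw [hfun]
    refine h3.congr_deriv ?_
    rw [← Real.rpow_def_of_pos hr]
    ring
  have h4 := h1.div (hasDerivAt_id s) hs
  refine h4.congr_deriv ?_
  simp only [id]
  field_simp
  ring

lemma term_bound {d γ β' M r s : ℝ} (hd : 0 < d) (hdr : d ≤ r) (hγ : 0 < γ)
    (hγβ : γ < β') (hβ2 : 2 < β') (hsl : β' ≤ s) (hsu : s ≤ M) :
    (s * |Real.log r| + 1) * r ^ (-s) ≤
      ((M / (β' - γ) + 1) + (M * |Real.log d| + 1) * d ^ (γ - M)) * r ^ (-γ) := by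
  have hr : 0 < r := lt_of_lt_of_le hd hdr
  have hM : 0 < M := by linarith
  have hs0 : 0 < s := by linarith
  have hrγ : 0 ≤ r ^ (-γ) := Real.rpow_nonneg hr.le _
  have hK2 : 0 ≤ (M * |Real.log d| + 1) * d ^ (γ - M) := by positivity
  have hK1 : 0 ≤ M / (β' - γ) + 1 := by
    have : 0 < β' - γ := by linarith
    positivity
  rcases le_or_gt 1 r with h1 | h1
  · -- r ≥ 1
    have hlog : 0 ≤ Real.log r := Real.log_nonneg h1
    have b1 : s * |Real.log r| + 1 ≤ M * Real.log r + 1 := by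
      rw [abs_of_nonneg hlog]
      have := mul_le_mul_of_nonneg_right hsu hlog
      linarith
    have b2 : r ^ (-s) ≤ r ^ (-β') :=
      Real.rpow_le_rpow_of_exponent_le h1 (by linarith)
    have hrβ : 0 ≤ r ^ (-β') := Real.rpow_nonneg hr.le _
    have hrs : 0 ≤ r ^ (-s) := Real.rpow_nonneg hr.le _
    have step : (s * |Real.log r| + 1) * r ^ (-s) ≤ (M * Real.log r + 1) * r ^ (-β') := by
      apply mul_le_mul b1 b2 hrs
      nlinarith
    have hβγ : 0 < β' - γ := by linarith
    have hlog2 : Real.log r ≤ r ^ (β' - γ) / (β' - γ) := Real.log_le_rpow_div hr.le hβγ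
    have hmul : r ^ (β' - γ) * r ^ (-β') = r ^ (-γ) := by
      rw [← Real.rpow_add hr]; ring_nf
    have step2 : (M * Real.log r + 1) * r ^ (-β') ≤ (M / (β' - γ) + 1) * r ^ (-γ) := by
      have e1 : M * Real.log r * r ^ (-β') ≤ M / (β' - γ) * r ^ (-γ) := by
        calc M * Real.log r * r ^ (-β')
            ≤ M * (r ^ (β' - γ) / (β' - γ)) * r ^ (-β') := by
              apply mul_le_mul_of_nonneg_right _ hrβ
              exact mul_le_mul_of_nonneg_left hlog2 hM.le
          _ = M / (β' - γ) * (r ^ (β' - γ) * r ^ (-β')) := by ring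
          _ = M / (β' - γ) * r ^ (-γ) := by rw [hmul]
      have e2 : r ^ (-β') ≤ r ^ (-γ) :=
        Real.rpow_le_rpow_of_exponent_le h1 (by linarith)
      nlinarith
    calc (s * |Real.log r| + 1) * r ^ (-s) ≤ (M / (β' - γ) + 1) * r ^ (-γ) :=
          step.trans step2
      _ ≤ _ := by nlinarith
  · -- r < 1
    have hlogr : Real.log r ≤ 0 := Real.log_nonpos hr.le h1.le
    have hld : Real.log d ≤ Real.log r := Real.log_le_log hd hdr
    have b1 : s * |Real.log r| + 1 ≤ M * |Real.log d| + 1 := by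
      have h5 : |Real.log r| ≤ |Real.log d| := by
        rw [abs_of_nonpos hlogr, abs_of_nonpos (hld.trans hlogr)]
        linarith
      have := mul_le_mul hsu h5 (abs_nonneg _) hM.le
      linarith
    have b2 : r ^ (-s) ≤ r ^ (-M) :=
      Real.rpow_le_rpow_of_exponent_ge hr h1.le (by linarith)
    have hmul : r ^ (-M) = r ^ (γ - M) * r ^ (-γ) := by
      rw [← Real.rpow_add hr]; ring_nf
    have b3 : r ^ (γ - M) ≤ d ^ (γ - M) :=
      Real.rpow_le_rpow_of_nonpos hd hdr (by linarith)
    have hrs : 0 ≤ r ^ (-s) := Real.rpow_nonneg hr.le _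
    have hrM : 0 ≤ r ^ (-M) := Real.rpow_nonneg hr.le _
    have step : (s * |Real.log r| + 1) * r ^ (-s) ≤
        (M * |Real.log d| + 1) * (d ^ (γ - M) * r ^ (-γ)) := by
      calc (s * |Real.log r| + 1) * r ^ (-s)
          ≤ (M * |Real.log d| + 1) * r ^ (-M) := by
            apply mul_le_mul b1 b2 hrs
            positivity
        _ = (M * |Real.log d| + 1) * (r ^ (γ - M) * r ^ (-γ)) := by rw [← hmul]
        _ ≤ _ := by
            apply mul_le_mul_of_nonneg_left _ (by positivity)
            exact mul_le_mul_of_nonneg_right b3 hrγ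
    calc (s * |Real.log r| + 1) * r ^ (-s)
        ≤ (M * |Real.log d| + 1) * d ^ (γ - M) * r ^ (-γ) := by
          rw [mul_assoc]; exact step
      _ ≤ _ := by nlinarith

lemma summable_aux {γ : ℝ} (hγ : 2 < γ) (K : ℝ) :
    Summable (fun x : {x : Fin 2 → ℤ // x ≠ 0} => K * ‖(x : Fin 2 → ℤ)‖ ^ (-γ)) :=
  ((EisensteinSeries.summable_one_div_norm_rpow hγ).subtype _).mul_left K


lemma zeta_div_hasDerivAt (u v : EuclideanSpace ℝ (Fin 2)) (hdet : det2 u v ≠ 0)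
    {β' M s : ℝ} (h2 : 2 < β') (hs : s ∈ Set.Ioo β' M) :
    HasDerivAt (fun t => epsteinZeta (latticeSet u v) t / t)
      (Fenergy s (latticeSet u v) / s ^ 2) s := by
  obtain ⟨e, he⟩ := lattice_equiv u v hdet
  obtain ⟨c, hc, hcb⟩ := lattice_lb u v hdet
  set r : {x : Fin 2 → ℤ // x ≠ 0} → ℝ := fun x => ‖(e x : EuclideanSpace ℝ (Fin 2))‖ with hrdef
  have hrpos : ∀ x, 0 < r x := by
    intro x
    have h0 : (e x : EuclideanSpace ℝ (Fin 2)) ≠ 0 := by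
      have := (e x).2.2
      simpa using this
    exact norm_pos_iff.2 h0
  have hrlb : ∀ x : {x : Fin 2 → ℤ // x ≠ 0}, c ≤ r x ∧ c * ‖(x : Fin 2 → ℤ)‖ ≤ r x := by
    intro x
    have : r x = ‖((x : Fin 2 → ℤ) 0 : ℝ) • u + ((x : Fin 2 → ℤ) 1 : ℝ) • v‖ := by
      rw [hrdef]; simp only; rw [he x]
    rw [this]
    exact hcb x.1 x.2
  set γ : ℝ := (2 + β') / 2 with hγdef
  have hγ2 : 2 < γ := by rw [hγdef]; linarith
  have hγβ : γ < β' := by rw [hγdef]; linarith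
  set K0 : ℝ := (M / (β' - γ) + 1) + (M * |Real.log c| + 1) * c ^ (γ - M) with hK0
  set g : {x : Fin 2 → ℤ // x ≠ 0} → ℝ → ℝ := fun x t => r x ^ (-t) / t with hg
  set g' : {x : Fin 2 → ℤ // x ≠ 0} → ℝ → ℝ := fun x t => -((t * Real.log (r x) + 1) * r x ^ (-t)) / t ^ 2 with hg'
  have hsne : ∀ t : ℝ, t ∈ Set.Ioo β' M → t ≠ 0 := fun t ht => by
    have := ht.1; intro h; rw [h] at this; linarith
  have key : HasDerivAt (fun t => ∑' x : {x : Fin 2 → ℤ // x ≠ 0}, g x t) (∑' x : {x : Fin 2 → ℤ // x ≠ 0}, g' x s) s := by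
    apply hasDerivAt_tsum_of_isPreconnected
      (u := fun x : {x : Fin 2 → ℤ // x ≠ 0} => (K0 * c ^ (-γ)) * ‖(x : Fin 2 → ℤ)‖ ^ (-γ))
      (summable_aux hγ2 _) isOpen_Ioo isPreconnected_Ioo
      (fun x t ht => hasDerivAt_term (r x) (hrpos x) (hsne t ht))
      ?_ hs ?_ hs
    · -- derivative bound
      intro x t ht
      have hxn : (0:ℝ) < ‖(x : Fin 2 → ℤ)‖ := norm_pos_iff.2 x.2
      have hrx := hrpos x
      have ht2 : (1:ℝ) ≤ t ^ 2 := by nlinarith [ht.1]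
      have habs : ‖g' x t‖ = |(t * Real.log (r x) + 1) * r x ^ (-t)| / t ^ 2 := by
        show ‖-((t * Real.log (r x) + 1) * r x ^ (-t)) / t ^ 2‖ = _
        rw [Real.norm_eq_abs, abs_div, abs_neg, abs_pow, sq_abs]
      have hstep1 : |(t * Real.log (r x) + 1) * r x ^ (-t)| ≤
          (t * |Real.log (r x)| + 1) * r x ^ (-t) := by
        rw [abs_mul, abs_of_nonneg (Real.rpow_nonneg hrx.le _)]
        apply mul_le_mul_of_nonneg_right _ (Real.rpow_nonneg hrx.le _)
        calc |t * Real.log (r x) + 1| ≤ |t * Real.log (r x)| + 1 := by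
              have := abs_add_le (t * Real.log (r x)) 1
              simpa using this
          _ = t * |Real.log (r x)| + 1 := by
              rw [abs_mul, abs_of_nonneg (by linarith [ht.1] : (0:ℝ) ≤ t)]
      have hstep2 : (t * |Real.log (r x)| + 1) * r x ^ (-t) ≤ K0 * r x ^ (-γ) :=
        term_bound hc (hrlb x).1 (by linarith) hγβ h2 ht.1.le ht.2.le
      have hstep3 : r x ^ (-γ) ≤ c ^ (-γ) * ‖(x : Fin 2 → ℤ)‖ ^ (-γ) := by
        rw [← Real.mul_rpow hc.le hxn.le]
        exact Real.rpow_le_rpow_of_nonpos (by positivity) (hrlb x).2 (by linarith)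
      have hK0pos : 0 ≤ K0 := by
        rw [hK0]
        have : 0 < β' - γ := by linarith
        have hM0 : 0 < M := by linarith [hs.1, hs.2]
        positivity
      calc ‖g' x t‖ = |(t * Real.log (r x) + 1) * r x ^ (-t)| / t ^ 2 := habs
        _ ≤ |(t * Real.log (r x) + 1) * r x ^ (-t)| := by
            apply div_le_self (abs_nonneg _) ht2
        _ ≤ (t * |Real.log (r x)| + 1) * r x ^ (-t) := hstep1
        _ ≤ K0 * r x ^ (-γ) := hstep2
        _ ≤ K0 * (c ^ (-γ) * ‖(x : Fin 2 → ℤ)‖ ^ (-γ)) :=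
            mul_le_mul_of_nonneg_left hstep3 hK0pos
        _ = (K0 * c ^ (-γ)) * ‖(x : Fin 2 → ℤ)‖ ^ (-γ) := by ring
    · -- summability at s
      have hs2 : 2 < s := by linarith [hs.1]
      apply Summable.of_nonneg_of_le _ _
        (summable_aux hs2 (c ^ (-s)))
      · intro x
        have := hrpos x
        have hs0 : 0 < s := by linarith
        show 0 ≤ r x ^ (-s) / s
        positivity
      · intro x
        have hxn : (0:ℝ) < ‖(x : Fin 2 → ℤ)‖ := norm_pos_iff.2 x.2
        have hrx := hrpos x
        have hs1 : (1:ℝ) ≤ s := by linarith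
        calc g x s ≤ r x ^ (-s) := by
              show r x ^ (-s) / s ≤ r x ^ (-s)
              exact div_le_self (Real.rpow_nonneg hrx.le _) hs1
          _ ≤ c ^ (-s) * ‖(x : Fin 2 → ℤ)‖ ^ (-s) := by
              rw [← Real.mul_rpow hc.le hxn.le]
              exact Real.rpow_le_rpow_of_nonpos (by positivity) (hrlb x).2 (by linarith)
  have hfun : (fun t => epsteinZeta (latticeSet u v) t / t) = fun t => ∑' x : {x : Fin 2 → ℤ // x ≠ 0}, g x t := by
    funext t
    rw [epsteinZeta,
      ← Equiv.tsum_eq e (fun p : ↥(latticeSet u v \ {0}) =>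
        ‖(p : EuclideanSpace ℝ (Fin 2))‖ ^ (-t)),
      ← tsum_div_const]
  have hval : Fenergy s (latticeSet u v) / s ^ 2 = ∑' x : {x : Fin 2 → ℤ // x ≠ 0}, g' x s := by
    rw [Fenergy,
      ← Equiv.tsum_eq e (fun p : ↥(latticeSet u v \ {0}) =>
        (s * Real.log ‖(p : EuclideanSpace ℝ (Fin 2))‖ + 1)
          / ‖(p : EuclideanSpace ℝ (Fin 2))‖ ^ s)]
    have hterm : ∀ x : {x : Fin 2 → ℤ // x ≠ 0}, g' x s =
        -((s * Real.log (r x) + 1) / r x ^ s) / s ^ 2 := by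
      intro x
      show -((s * Real.log (r x) + 1) * r x ^ (-s)) / s ^ 2 = _
      rw [Real.rpow_neg (norm_nonneg _), ← div_eq_mul_inv]
    rw [tsum_congr hterm, tsum_div_const, tsum_neg]
  rw [hfun, hval]
  exact key


lemma vec2_apply0 (a b : ℝ) : vec2 a b 0 = a := rfl
lemma vec2_apply1 (a b : ℝ) : vec2 a b 1 = b := rfl

lemma tri_det : det2 (Real.sqrt (2 / Real.sqrt 3) • vec2 1 0)
    (Real.sqrt (2 / Real.sqrt 3) • vec2 (1 / 2) (Real.sqrt 3 / 2)) ≠ 0 := by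
  have h3 : (0:ℝ) < Real.sqrt 3 := Real.sqrt_pos.2 (by norm_num)
  have hk : Real.sqrt (2 / Real.sqrt 3) ^ 2 = 2 / Real.sqrt 3 :=
    Real.sq_sqrt (by positivity)
  unfold det2
  simp only [PiLp.smul_apply, vec2_apply0, vec2_apply1, smul_eq_mul]
  have expand : ∀ k : ℝ, k * 1 * (k * (Real.sqrt 3 / 2)) - k * 0 * (k * (1 / 2))
      = k ^ 2 * (Real.sqrt 3 / 2) := fun k => by ring
  rw [expand, hk]
  positivity

/-- If, for every `s > 2`, `A₂` is the unique minimizer (up to rotation) of `F_s` among unit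
co-volume lattices, then for all `α > β > 2` and every unit co-volume lattice `L` not a
rotation of `A₂`, `ζ_L(α) - ζ_{A₂}(α) > (α/β)(ζ_L(β) - ζ_{A₂}(β))`. -/
theorem conjecture_implies_quotient_bound
    (hconj : ∀ s : ℝ, 2 < s → ∀ L : Set (EuclideanSpace ℝ (Fin 2)), IsLattice2OfCovol L 1 →
      Fenergy s triangularLattice ≤ Fenergy s L ∧
      (Fenergy s L = Fenergy s triangularLattice ↔ IsRotationOf L triangularLattice)) :
    ∀ α β : ℝ, 2 < β → β < α →
      ∀ L : Set (EuclideanSpace ℝ (Fin 2)), IsLattice2OfCovol L 1 →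
        ¬ IsRotationOf L triangularLattice →
        epsteinZeta L α - epsteinZeta triangularLattice α >
          (α / β) * (epsteinZeta L β - epsteinZeta triangularLattice β) := by
  intro α β hβ hβα L hL hrot
  obtain ⟨u, v, hdet, _, hLeq⟩ := hL
  have hβ0 : (0:ℝ) < β := by linarith
  have hα0 : (0:ℝ) < α := by linarith
  set β' : ℝ := (2 + β) / 2 with hβ'
  have h2β' : 2 < β' := by rw [hβ']; linarith
  have hβ'β : β' < β := by rw [hβ']; linarith
  set φ : ℝ → ℝ := fun t => epsteinZeta L t / t - epsteinZeta triangularLattice t / t with hφ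
  have hder : ∀ s ∈ Set.Icc β α, HasDerivAt φ
      ((Fenergy s L - Fenergy s triangularLattice) / s ^ 2) s := by
    intro s hsm
    have hs' : s ∈ Set.Ioo β' (α + 1) :=
      ⟨lt_of_lt_of_le hβ'β hsm.1, lt_of_le_of_lt hsm.2 (by linarith)⟩
    have h1 : HasDerivAt (fun t => epsteinZeta L t / t) (Fenergy s L / s ^ 2) s := by
      rw [hLeq]
      exact zeta_div_hasDerivAt u v hdet h2β' hs'
    have h2 : HasDerivAt (fun t => epsteinZeta triangularLattice t / t)
        (Fenergy s triangularLattice / s ^ 2) s :=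
      zeta_div_hasDerivAt _ _ tri_det h2β' hs'
    have := h1.sub h2
    rwa [← sub_div] at this
  have hmono : StrictMonoOn φ (Set.Icc β α) := by
    apply strictMonoOn_of_deriv_pos (convex_Icc β α)
    · exact fun s hsm => (hder s hsm).continuousAt.continuousWithinAt
    · intro x hx
      rw [interior_Icc] at hx
      have hx' : x ∈ Set.Icc β α := Set.Ioo_subset_Icc_self hx
      rw [(hder x hx').deriv]
      apply div_pos
      · obtain ⟨hle, hiff⟩ := hconj x (by linarith [hx.1]) L ⟨u, v, hdet, ‹_›, hLeq⟩
        have hne : Fenergy x triangularLattice ≠ Fenergy x L := by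
          intro heq
          exact hrot (hiff.1 heq.symm)
        exact sub_pos.2 (lt_of_le_of_ne hle hne)
      · have : 0 < x := by linarith [hx.1]
        positivity
  have hφlt : φ β < φ α :=
    hmono ⟨le_refl β, hβα.le⟩ ⟨hβα.le, le_refl α⟩ hβα
  have hφβ : φ β = (epsteinZeta L β - epsteinZeta triangularLattice β) / β := by
    rw [hφ]; simp only; rw [div_sub_div_same]
  have hφα : φ α = (epsteinZeta L α - epsteinZeta triangularLattice α) / α := by
    rw [hφ]; simp only; rw [div_sub_div_same]
  rw [hφβ, hφα] at hφlt
  have hkey := (div_lt_div_iff₀ hβ0 hα0).1 hφlt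
  rw [gt_iff_lt, div_mul_eq_mul_div, div_lt_iff₀ hβ0]
  nlinarith [hkey]
end
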